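/- Let P be a Markov kernel on a measurable space Z satisfying the super-Lyapunov drift condition: there are constants c > 0, b ≥ 1, δ ∈ (1/2, 1], R₀ ≥ 0 and a measurable function V : Z → [e, ∞) such that, setting W = log V, for every z ∈ Z one has PV(z) ≤ exp(−c W(z)^δ) V(z) if W(z) > R₀, and PV(z) ≤ b if W(z) ≤ R₀. Let λ ∈ [0,1) be such that exp(−c W(z)^δ) ≤ λ whenever W(z) > R₀. Let π be a probability measure on Z invariant for P (i.e., ∫ P(z, B) π(dz) = π(B) for all measurable B) with ∫ V dπ < ∞. Then: (i) ∫ V dπ ≤ b/(1−λ); and (ii) for every γ with 0 < γ ≤ δ, ∫ W^γ dπ ≤ b_γ/c_γ, where c_γ = min(1, (γ+1−δ)c) and b_γ = (log b)^{γ+1−δ}. -/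

import Mathlib

open MeasureTheory ProbabilityTheory
open scoped ENNReal NNReal

lemma my_jensen_log {α : Type*} [MeasurableSpace α] (μ : Measure α) [IsProbabilityMeasure μ]
    {f : α → ℝ} (hf : ∀ x, 1 ≤ f x) (hm : Measurable f) (hi : Integrable f μ) :
    ∫ x, Real.log (f x) ∂μ ≤ Real.log (∫ x, f x ∂μ) := by
  have hconc : ConcaveOn ℝ (Set.Ici 1) Real.log :=
    (strictConcaveOn_log_Ioi.concaveOn).subset (fun x hx => Set.mem_Ioi.mpr (lt_of_lt_of_le one_pos hx))
      (convex_Ici 1)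
  have hcont : ContinuousOn Real.log (Set.Ici 1) :=
    Real.continuousOn_log.mono (fun x hx => by
      simp only [Set.mem_compl_iff, Set.mem_singleton_iff]
      exact ne_of_gt (lt_of_lt_of_le one_pos hx))
  have hgi : Integrable (Real.log ∘ f) μ := by
    refine Integrable.mono' hi (hm.log.aestronglyMeasurable) ?_
    filter_upwards with x
    have h1 : 0 ≤ Real.log (f x) := Real.log_nonneg (hf x)
    have h2 : Real.log (f x) ≤ f x :=
      (Real.log_le_sub_one_of_pos (lt_of_lt_of_le one_pos (hf x))).trans (by linarith)
    simpa [Real.norm_eq_abs, abs_of_nonneg h1] using h2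
  exact hconc.le_map_integral hcont isClosed_Ici
    (Filter.Eventually.of_forall fun x => hf x) hi hgi

lemma my_jensen_rpow {α : Type*} [MeasurableSpace α] (μ : Measure α) [IsProbabilityMeasure μ]
    {f : α → ℝ} {β : ℝ} (hf : ∀ x, 0 ≤ f x) (hi : Integrable f μ)
    (hgi : Integrable (fun x => f x ^ β) μ) (hβ0 : 0 ≤ β) (hβ1 : β ≤ 1) :
    ∫ x, f x ^ β ∂μ ≤ (∫ x, f x ∂μ) ^ β := by
  have hcont : ContinuousOn (fun x : ℝ => x ^ β) (Set.Ici 0) :=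
    fun x _ => (Real.continuousAt_rpow_const x β (Or.inr hβ0)).continuousWithinAt
  exact (Real.concaveOn_rpow hβ0 hβ1).le_map_integral hcont isClosed_Ici
    (Filter.Eventually.of_forall fun x => hf x) hi hgi

lemma my_bernoulli {a h β : ℝ} (ha : 0 < a) (hh : 0 ≤ h) (hha : h ≤ a)
    (hβ0 : 0 ≤ β) (hβ1 : β ≤ 1) :
    (a - h) ^ β ≤ a ^ β - β * a ^ (β - 1) * h := by
  have hs : -1 ≤ -(h / a) := by
    rw [neg_le_neg_iff]
    exact div_le_one_of_le₀ hha ha.le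
  have hB := rpow_one_add_le_one_add_mul_self hs hβ0 hβ1
  have key : (a - h) ^ β = a ^ β * (1 + -(h / a)) ^ β := by
    have h1 : (0:ℝ) ≤ 1 + -(h / a) := by
      have := div_le_one_of_le₀ hha ha.le
      linarith
    rw [← Real.mul_rpow ha.le h1]
    congr 1
    field_simp
    ring
  rw [key]
  have hab : a ^ β * (1 + -(h/a)) ^ β ≤ a ^ β * (1 + β * -(h/a)) :=
    mul_le_mul_of_nonneg_left hB (Real.rpow_nonneg ha.le β)
  refine hab.trans_eq ?_
  have : a ^ (β - 1) = a ^ β / a := by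
    rw [Real.rpow_sub ha, Real.rpow_one]
  rw [this]
  field_simp
  ring

/-- Under the super-Lyapunov drift condition, if `π` is an invariant
probability measure for `P` with `∫ V dπ < ∞`, then `∫ V dπ ≤ b/(1−λ)` and, for every
`0 < γ ≤ δ`, `∫ W^γ dπ ≤ b_γ/c_γ` where `c_γ = min(1, (γ+1−δ)c)` and
`b_γ = (log b)^{γ+1−δ}`. -/
theorem stationary_moment_bounds {Z : Type*} [MeasurableSpace Z]
    (P : Kernel Z Z) [IsMarkovKernel P]
    (V : Z → ℝ) (hVmeas : Measurable V) (hVe : ∀ z, Real.exp 1 ≤ V z)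
    (c b δ R₀ : ℝ) (hc : 0 < c) (hb : 1 ≤ b)
    (hδ1 : 1 / 2 < δ) (hδ2 : δ ≤ 1) (hR₀ : 0 ≤ R₀)
    (W : Z → ℝ) (hW : W = fun z => Real.log (V z))
    (hdrift₁ : ∀ z, R₀ < W z →
      ∫⁻ y, ENNReal.ofReal (V y) ∂(P z) ≤
        ENNReal.ofReal (Real.exp (-c * W z ^ δ) * V z))
    (hdrift₂ : ∀ z, W z ≤ R₀ → ∫⁻ y, ENNReal.ofReal (V y) ∂(P z) ≤ ENNReal.ofReal b)
    (lam : ℝ) (hlam0 : 0 ≤ lam) (hlam1 : lam < 1)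
    (hlam : ∀ z, R₀ < W z → Real.exp (-c * W z ^ δ) ≤ lam)
    (π : Measure Z) [IsProbabilityMeasure π]
    (hπ : Kernel.Invariant P π)
    (hVint : ∫⁻ z, ENNReal.ofReal (V z) ∂π < ⊤) :
    (∫⁻ z, ENNReal.ofReal (V z) ∂π ≤ ENNReal.ofReal (b / (1 - lam))) ∧
      (∀ γ : ℝ, 0 < γ → γ ≤ δ →
        ∫⁻ z, ENNReal.ofReal (W z ^ γ) ∂π ≤
          ENNReal.ofReal
            (Real.log b ^ (γ + 1 - δ) / min 1 ((γ + 1 - δ) * c))) := by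
  have hVpos : ∀ z, 0 < V z := fun z => (Real.exp_pos 1).trans_le (hVe z)
  have hWlog : ∀ z, W z = Real.log (V z) := fun z => by rw [hW]
  have hW1 : ∀ z, 1 ≤ W z := by
    intro z
    rw [hWlog z]
    calc (1:ℝ) = Real.log (Real.exp 1) := (Real.log_exp 1).symm
      _ ≤ Real.log (V z) := Real.log_le_log (Real.exp_pos 1) (hVe z)
  have hW0 : ∀ z, 0 < W z := fun z => lt_of_lt_of_le one_pos (hW1 z)
  have hWmeas : Measurable W := by rw [hW]; exact hVmeas.log
  have hWleV : ∀ z, W z ≤ V z := by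
    intro z
    have h2 := Real.log_le_sub_one_of_pos (hVpos z)
    rw [hWlog z]; linarith
  have hfinz : ∀ z, ∫⁻ y, ENNReal.ofReal (V y) ∂(P z) < ⊤ := by
    intro z
    rcases le_or_gt (W z) R₀ with h | h
    · exact (hdrift₂ z h).trans_lt ENNReal.ofReal_lt_top
    · exact (hdrift₁ z h).trans_lt ENNReal.ofReal_lt_top
  have hVint_z : ∀ z, Integrable V (P z) := by
    intro z
    refine ⟨hVmeas.aestronglyMeasurable, ?_⟩
    rw [hasFiniteIntegral_iff_ofReal (Filter.Eventually.of_forall fun y => (hVpos y).le)]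
    exact hfinz z
  have hIeq : ∀ z, ∫ y, V y ∂(P z) = (∫⁻ y, ENNReal.ofReal (V y) ∂(P z)).toReal := by
    intro z
    rw [integral_eq_lintegral_of_nonneg_ae (Filter.Eventually.of_forall fun y => (hVpos y).le)
      hVmeas.aestronglyMeasurable]
  have hinv : ∀ g : Z → ℝ≥0∞, Measurable g →
      ∫⁻ z, ∫⁻ y, g y ∂(P z) ∂π = ∫⁻ z, g z ∂π := by
    intro g hg
    conv_rhs => rw [← hπ.def]
    rw [Measure.lintegral_bind P.measurable.aemeasurable hg.aemeasurable]
  -- Part (i)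
  have hmono1 : ∀ z, ∫⁻ y, ENNReal.ofReal (V y) ∂(P z) ≤
      ENNReal.ofReal lam * ENNReal.ofReal (V z) + ENNReal.ofReal b := by
    intro z
    rcases le_or_gt (W z) R₀ with h | h
    · exact le_add_left (hdrift₂ z h)
    · refine le_add_right ?_
      refine (hdrift₁ z h).trans ?_
      rw [← ENNReal.ofReal_mul hlam0]
      exact ENNReal.ofReal_le_ofReal (mul_le_mul_of_nonneg_right (hlam z h) (hVpos z).le)
  set I := ∫⁻ z, ENNReal.ofReal (V z) ∂π with hIdef
  have hIne : I ≠ ⊤ := hVint.ne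
  have hIle : I ≤ ENNReal.ofReal lam * I + ENNReal.ofReal b := by
    calc I = ∫⁻ z, ∫⁻ y, ENNReal.ofReal (V y) ∂(P z) ∂π :=
        (hinv _ hVmeas.ennreal_ofReal).symm
      _ ≤ ∫⁻ z, (ENNReal.ofReal lam * ENNReal.ofReal (V z) + ENNReal.ofReal b) ∂π :=
        lintegral_mono hmono1
      _ = ENNReal.ofReal lam * I + ENNReal.ofReal b := by
        rw [lintegral_add_right _ measurable_const, lintegral_const_mul _ hVmeas.ennreal_ofReal,
          lintegral_const, measure_univ, mul_one]
  have part1 : I ≤ ENNReal.ofReal (b / (1 - lam)) := by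
    have hfin2 : ENNReal.ofReal lam * I + ENNReal.ofReal b ≠ ⊤ :=
      ENNReal.add_ne_top.mpr ⟨ENNReal.mul_ne_top ENNReal.ofReal_ne_top hIne,
        ENNReal.ofReal_ne_top⟩
    have hreal : I.toReal ≤ lam * I.toReal + b := by
      have h := ENNReal.toReal_mono hfin2 hIle
      rwa [ENNReal.toReal_add (ENNReal.mul_ne_top ENNReal.ofReal_ne_top hIne)
        ENNReal.ofReal_ne_top, ENNReal.toReal_mul, ENNReal.toReal_ofReal hlam0,
        ENNReal.toReal_ofReal (by linarith)] at h
    have hItoReal : I.toReal ≤ b / (1 - lam) := by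
      rw [le_div_iff₀ (by linarith)]
      nlinarith
    calc I = ENNReal.ofReal I.toReal := (ENNReal.ofReal_toReal hIne).symm
      _ ≤ ENNReal.ofReal (b / (1 - lam)) := ENNReal.ofReal_le_ofReal hItoReal
  refine ⟨part1, ?_⟩
  -- Part (ii)
  intro γ hγ0 hγδ
  set β := γ + 1 - δ with hβdef
  have hβ0 : 0 < β := by simp only [hβdef]; linarith
  have hβ1 : β ≤ 1 := by simp only [hβdef]; linarith
  have hγβ : γ ≤ β := by simp only [hβdef]; linarith
  have hWβmeas : Measurable fun z => W z ^ β :=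
    (Real.continuous_rpow_const hβ0.le).measurable.comp hWmeas
  have hWγmeas : Measurable fun z => W z ^ γ :=
    (Real.continuous_rpow_const hγ0.le).measurable.comp hWmeas
  have hWint_z : ∀ z, Integrable W (P z) := fun z =>
    (hVint_z z).mono' hWmeas.aestronglyMeasurable (Filter.Eventually.of_forall fun y => by
      rw [Real.norm_eq_abs, abs_of_nonneg (hW0 y).le]; exact hWleV y)
  have hWβle : ∀ y, W y ^ β ≤ W y := fun y => by
    calc W y ^ β ≤ W y ^ (1:ℝ) := Real.rpow_le_rpow_of_exponent_le (hW1 y) hβ1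
      _ = W y := Real.rpow_one _
  have hWβint_z : ∀ z, Integrable (fun y => W y ^ β) (P z) := fun z =>
    (hVint_z z).mono' hWβmeas.aestronglyMeasurable (Filter.Eventually.of_forall fun y => by
      rw [Real.norm_eq_abs, abs_of_nonneg (Real.rpow_nonneg (hW0 y).le β)]
      exact (hWβle y).trans (hWleV y))
  have hJz : ∀ z, 1 ≤ ∫ y, W y ∂(P z) := by
    intro z
    calc (1:ℝ) = ∫ _, (1:ℝ) ∂(P z) := by simp
      _ ≤ ∫ y, W y ∂(P z) := integral_mono (integrable_const 1) (hWint_z z)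
        (fun y => hW1 y)
  have hJlog : ∀ z, ∫ y, W y ∂(P z) ≤ Real.log (∫ y, V y ∂(P z)) := by
    intro z
    have h := my_jensen_log (P z) (fun y => le_trans (by norm_num [Real.one_le_exp_iff]) (hVe y))
      hVmeas (hVint_z z)
    calc ∫ y, W y ∂(P z) = ∫ y, Real.log (V y) ∂(P z) := by
          simp only [hW]
      _ ≤ Real.log (∫ y, V y ∂(P z)) := h
  have hrpowz : ∀ z, ∫ y, W y ^ β ∂(P z) ≤ (∫ y, W y ∂(P z)) ^ β := fun z =>
    my_jensen_rpow (P z) (fun y => (hW0 y).le) (hWint_z z) (hWβint_z z) hβ0.le hβ1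
  set m := min 1 (β * c) with hmdef
  have hm0 : 0 < m := lt_min one_pos (by positivity)
  have hmβc : m ≤ β * c := min_le_right _ _
  have hlogb0 : 0 ≤ Real.log b := Real.log_nonneg hb
  have hlogbβ0 : 0 ≤ Real.log b ^ β := Real.rpow_nonneg hlogb0 β
  -- pointwise key inequality
  have pz : ∀ z, ENNReal.ofReal (m * W z ^ γ) + ∫⁻ y, ENNReal.ofReal (W y ^ β) ∂(P z)
      ≤ ENNReal.ofReal (W z ^ β) + ENNReal.ofReal (Real.log b ^ β) := by
    intro z
    have hWγ0 : 0 ≤ W z ^ γ := Real.rpow_nonneg (hW0 z).le γ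
    have hint0 : 0 ≤ ∫ y, W y ^ β ∂(P z) :=
      integral_nonneg fun y => Real.rpow_nonneg (hW0 y).le β
    have hLz : ∫⁻ y, ENNReal.ofReal (W y ^ β) ∂(P z) = ENNReal.ofReal (∫ y, W y ^ β ∂(P z)) :=
      (ofReal_integral_eq_lintegral_ofReal (hWβint_z z)
        (Filter.Eventually.of_forall fun y => Real.rpow_nonneg (hW0 y).le β)).symm
    rw [hLz, ← ENNReal.ofReal_add (mul_nonneg hm0.le hWγ0) hint0,
      ← ENNReal.ofReal_add (Real.rpow_nonneg (hW0 z).le β) hlogbβ0]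
    apply ENNReal.ofReal_le_ofReal
    -- real inequality
    rcases le_or_gt (W z) R₀ with h | h
    · -- small set
      have hIzle : ∫ y, V y ∂(P z) ≤ b := by
        rw [hIeq z]
        have h2 := ENNReal.toReal_mono ENNReal.ofReal_ne_top (hdrift₂ z h)
        rwa [ENNReal.toReal_ofReal (by linarith)] at h2
      have hIzpos : (0:ℝ) < ∫ y, V y ∂(P z) := by
        calc (0:ℝ) < 1 := one_pos
          _ ≤ ∫ y, W y ∂(P z) := hJz z
          _ ≤ ∫ y, V y ∂(P z) := integral_mono (hWint_z z) (hVint_z z) (fun y => hWleV y)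
      have hlogle : Real.log (∫ y, V y ∂(P z)) ≤ Real.log b :=
        Real.log_le_log hIzpos hIzle
      have hJb : ∫ y, W y ∂(P z) ≤ Real.log b := (hJlog z).trans hlogle
      have hrp : (∫ y, W y ∂(P z)) ^ β ≤ Real.log b ^ β :=
        Real.rpow_le_rpow (le_trans zero_le_one (hJz z)) hJb hβ0.le
      have hWγβ : W z ^ γ ≤ W z ^ β := Real.rpow_le_rpow_of_exponent_le (hW1 z) hγβ
      have hmW : m * W z ^ γ ≤ W z ^ β := by
        calc m * W z ^ γ ≤ 1 * W z ^ γ :=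
            mul_le_mul_of_nonneg_right (min_le_left _ _) hWγ0
          _ = W z ^ γ := one_mul _
          _ ≤ W z ^ β := hWγβ
      have := (hrpowz z).trans hrp
      linarith
    · -- big set
      have hIzle : ∫ y, V y ∂(P z) ≤ Real.exp (-c * W z ^ δ) * V z := by
        rw [hIeq z]
        have h2 := ENNReal.toReal_mono ENNReal.ofReal_ne_top (hdrift₁ z h)
        rwa [ENNReal.toReal_ofReal (mul_nonneg (Real.exp_pos _).le (hVpos z).le)] at h2
      have hIzpos : (0:ℝ) < ∫ y, V y ∂(P z) := by
        calc (0:ℝ) < 1 := one_pos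
          _ ≤ ∫ y, W y ∂(P z) := hJz z
          _ ≤ ∫ y, V y ∂(P z) := integral_mono (hWint_z z) (hVint_z z) (fun y => hWleV y)
      have hlogle : Real.log (∫ y, V y ∂(P z)) ≤ -c * W z ^ δ + W z := by
        have h2 := Real.log_le_log hIzpos hIzle
        rwa [Real.log_mul (Real.exp_ne_zero _) (ne_of_gt (hVpos z)), Real.log_exp,
          ← hWlog z] at h2
      have hJle : ∫ y, W y ∂(P z) ≤ W z - c * W z ^ δ := by
        have := (hJlog z).trans hlogle
        linarith
      have hcd : 0 ≤ c * W z ^ δ := mul_nonneg hc.le (Real.rpow_nonneg (hW0 z).le δ)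
      have hcdle : c * W z ^ δ ≤ W z := by
        have := (hJz z).trans hJle
        linarith
      have hrp : (∫ y, W y ∂(P z)) ^ β ≤ (W z - c * W z ^ δ) ^ β :=
        Real.rpow_le_rpow (le_trans zero_le_one (hJz z)) hJle hβ0.le
      have hbern : (W z - c * W z ^ δ) ^ β ≤ W z ^ β - β * W z ^ (β - 1) * (c * W z ^ δ) :=
        my_bernoulli (hW0 z) hcd hcdle hβ0.le hβ1
      have hpow : W z ^ (β - 1) * W z ^ δ = W z ^ γ := by
        rw [← Real.rpow_add (hW0 z)]
        congr 1
        rw [hβdef]; ring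
      have hfinal : ∫ y, W y ^ β ∂(P z) ≤ W z ^ β - β * c * W z ^ γ := by
        have h3 := (hrpowz z).trans (hrp.trans hbern)
        have h4 : β * W z ^ (β - 1) * (c * W z ^ δ) = β * c * W z ^ γ := by
          rw [← hpow]; ring
        linarith [h3, h4.le, h4.ge]
      have hmW : m * W z ^ γ ≤ β * c * W z ^ γ :=
        mul_le_mul_of_nonneg_right hmβc hWγ0
      linarith
  -- integrate the pointwise inequality
  set S := ∫⁻ z, ENNReal.ofReal (m * W z ^ γ) ∂π with hSdef
  set T := ∫⁻ z, ENNReal.ofReal (W z ^ β) ∂π with hTdef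
  have hTle : T ≤ I := lintegral_mono fun z =>
    ENNReal.ofReal_le_ofReal ((hWβle z).trans (hWleV z))
  have hTfin : T ≠ ⊤ := (hTle.trans_lt hVint).ne
  have hmWγmeas : Measurable fun z => ENNReal.ofReal (m * W z ^ γ) :=
    (hWγmeas.const_mul m).ennreal_ofReal
  have hbig : S + T ≤ T + ENNReal.ofReal (Real.log b ^ β) := by
    calc S + T
        = ∫⁻ z, (ENNReal.ofReal (m * W z ^ γ) + ∫⁻ y, ENNReal.ofReal (W y ^ β) ∂(P z)) ∂π := by
          rw [lintegral_add_left hmWγmeas, hinv _ hWβmeas.ennreal_ofReal]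
      _ ≤ ∫⁻ z, (ENNReal.ofReal (W z ^ β) + ENNReal.ofReal (Real.log b ^ β)) ∂π :=
          lintegral_mono pz
      _ = T + ENNReal.ofReal (Real.log b ^ β) := by
          rw [lintegral_add_right _ measurable_const, lintegral_const, measure_univ, mul_one]
  have hScancel : S ≤ ENNReal.ofReal (Real.log b ^ β) := by
    rw [add_comm S T] at hbig
    exact (ENNReal.add_le_add_iff_left hTfin).mp hbig
  have hSeq : S = ENNReal.ofReal m * ∫⁻ z, ENNReal.ofReal (W z ^ γ) ∂π := by
    rw [hSdef]
    simp_rw [ENNReal.ofReal_mul hm0.le]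
    rw [lintegral_const_mul _ hWγmeas.ennreal_ofReal]
  rw [hSeq] at hScancel
  rw [ENNReal.ofReal_div_of_pos hm0]
  rw [ENNReal.le_div_iff_mul_le (Or.inl (ENNReal.ofReal_pos.mpr hm0).ne')
    (Or.inl ENNReal.ofReal_ne_top)]
  rwa [mul_comm]
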